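/- In the free group F on generators a₁,…,a_q, let V be a cyclically reduced word of length n ≥ 1 representing a nonpower conjugacy class, and let (i,j), (k,h) be two distinct pairs of indices in {0,…,n-1}² each satisfying the letter conditions i ≠ j, v_i ≠ v_j, v̄_i ≠ v_{j-1} (resp. for (k,h)). Then for any m ≥ 2 and l ≥ 1, the elements of F represented by V_i^m V_{i,j} and V_k^l V_{k,h} lie in different conjugacy classes of F. -/

import Mathlib

/-- The word `v_i v_{i+1} … v_{i+len-1}` read off from the letter function `v`. -/
def seg {A : Type*} (v : ℕ → A) (i len : ℕ) : List A :=
  (List.range len).map (fun t => v (i + t))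

/-- Freely reduced: no letter is followed by its formal inverse. -/
def FRed {A : Type*} (bar : A → A) (w : List A) : Prop :=
  w.Chain' (fun x y => y ≠ bar x)

/-- Cyclically reduced: every rotation is freely reduced. -/
def CRed {A : Type*} (bar : A → A) (w : List A) : Prop :=
  ∀ r, FRed bar (w.rotate r)

/-- `p`-fold concatenation power of a word. -/
def pw {A : Type*} (w : List A) (m : ℕ) : List A := (List.replicate m w).flatten

/-- `w₂` is a cyclic rotation of `w₁`. -/
def IsRot {A : Type*} (w₁ w₂ : List A) : Prop := ∃ r, w₂ = w₁.rotate r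

/-- The cyclic class of `w` is not that of a proper power. -/
def Nonpower {A : Type*} (w : List A) : Prop :=
  ¬ ∃ (u : List A) (p : ℕ), 2 ≤ p ∧ IsRot (pw u p) w

/-- The formal inverse on the alphabet `{a₁,…,a_q, ā₁,…,ā_q} = Fin q × Bool`. -/
def barF (q : ℕ) : Fin q × Bool → Fin q × Bool := fun x => (x.1, !x.2)

set_option linter.unusedSectionVars false
set_option linter.unusedVariables false

namespace FGaux

variable {α : Type*} [DecidableEq α]

/-- The letter inverse. -/
def bb : α × Bool → α × Bool := fun x => (x.1, !x.2)

@[simp] lemma bb_bb (x : α × Bool) : bb (bb x) = x := by simp [bb]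

lemma bb_eq_iff {x y : α × Bool} : x = bb y ↔ y = bb x := by
  constructor <;> (rintro rfl; simp)

open FreeGroup List

lemma fred_reduce (L : List (α × Bool)) : FRed bb (FreeGroup.reduce L) := by
  induction L with
  | nil => simp [FRed, List.Chain']
  | cons x L ih =>
    rw [FreeGroup.reduce.cons]
    rcases hL : FreeGroup.reduce L with _ | ⟨y, t⟩
    · simp [FRed, List.Chain']
    · rw [hL] at ih
      by_cases hc : x.1 = y.1 ∧ x.2 = !y.2
      · simp only [hc, if_true]
        exact ih.tail
      · simp only [hc, if_false]
        refine List.isChain_cons_cons.2 ⟨?_, ih⟩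
        intro h
        apply hc
        rw [h]
        exact ⟨rfl, by simp [bb]⟩

lemma reduce_eq_self {L : List (α × Bool)} (h : FRed bb L) : FreeGroup.reduce L = L := by
  induction L with
  | nil => rfl
  | cons x L ih =>
    have hL : FreeGroup.reduce L = L := ih h.tail
    rw [FreeGroup.reduce.cons, hL]
    rcases L with _ | ⟨y, t⟩
    · rfl
    · have hxy : y ≠ bb x := (List.isChain_cons_cons.1 h).1
      have hc : ¬(x.1 = y.1 ∧ x.2 = !y.2) := by
        rintro ⟨h1, h2⟩
        apply hxy
        rw [bb_eq_iff]
        exact Prod.ext h1 h2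
      simp [hc]

lemma mk_eq_mk {L₁ L₂ : List (α × Bool)} (h : FreeGroup.mk L₁ = FreeGroup.mk L₂)
    (h1 : FRed bb L₁) (h2 : FRed bb L₂) : L₁ = L₂ := by
  have := FreeGroup.reduce.sound h
  rwa [reduce_eq_self h1, reduce_eq_self h2] at this

lemma fred_toWord (x : FreeGroup α) : FRed bb x.toWord := by
  rw [← FreeGroup.reduce_toWord]
  exact fred_reduce _

lemma mk_cancel (x : α × Bool) (L : List (α × Bool)) :
    FreeGroup.mk (x :: bb x :: L) = FreeGroup.mk L := by
  rcases x with ⟨a, b⟩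
  exact Quot.sound (FreeGroup.Red.Step.cons_not)

lemma invRev_eq (L : List (α × Bool)) : FreeGroup.invRev L = (L.map bb).reverse := rfl

lemma fred_invRev {L : List (α × Bool)} (h : FRed bb L) : FRed bb (FreeGroup.invRev L) := by
  rw [invRev_eq, FRed, List.Chain', List.isChain_reverse, List.isChain_map]
  refine h.imp ?_
  intro a b hab hcon
  apply hab
  have h2 := congrArg bb hcon
  simp only [bb_bb] at h2
  exact bb_eq_iff.mp h2

lemma mk_cancel' (L₁ L₂ : List (α × Bool)) (x : α × Bool) :
    FreeGroup.mk (L₁ ++ x :: bb x :: L₂) = FreeGroup.mk (L₁ ++ L₂) := by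
  rcases x with ⟨a, b⟩
  exact Quot.sound FreeGroup.Red.Step.not

lemma rotate_one_cons (a : α × Bool) (t : List (α × Bool)) :
    (a :: t).rotate 1 = t ++ [a] := by
  simpa using List.rotate_cons_succ t a 0

lemma conj_rot1 (a : α × Bool) (t : List (α × Bool)) :
    FreeGroup.mk [bb a] * FreeGroup.mk (a :: t) * (FreeGroup.mk [bb a])⁻¹ =
      FreeGroup.mk (t ++ [a]) := by
  have h1 : FreeGroup.invRev [bb a] = [a] := by simp [invRev_eq]
  rw [FreeGroup.inv_mk, h1, FreeGroup.mul_mk, FreeGroup.mul_mk]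
  have h2 : ([bb a] ++ a :: t) ++ [a] = bb a :: bb (bb a) :: (t ++ [a]) := by simp
  rw [h2, mk_cancel]

lemma conj_rotlast (a : α × Bool) (t : List (α × Bool)) :
    FreeGroup.mk [a] * FreeGroup.mk (t ++ [a]) * (FreeGroup.mk [a])⁻¹ =
      FreeGroup.mk (a :: t) := by
  have h1 : FreeGroup.invRev [a] = [bb a] := rfl
  rw [FreeGroup.inv_mk, h1, FreeGroup.mul_mk, FreeGroup.mul_mk]
  have h2 : ([a] ++ (t ++ [a])) ++ [bb a] = (a :: t) ++ a :: bb a :: [] := by simp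
  rw [h2, mk_cancel', List.append_nil]

lemma conj_eq_mk (d w : List (α × Bool)) :
    FreeGroup.mk d * FreeGroup.mk w * (FreeGroup.mk d)⁻¹ =
      FreeGroup.mk (d ++ w ++ FreeGroup.invRev d) := by
  rw [FreeGroup.inv_mk, FreeGroup.mul_mk, FreeGroup.mul_mk]

lemma cred_rotate {w : List (α × Bool)} (h : CRed bb w) (s : ℕ) : CRed bb (w.rotate s) := by
  intro r
  rw [List.rotate_rotate]
  exact h _

lemma rotate_ne_nil {l : List (α × Bool)} (h : l ≠ []) (r : ℕ) : l.rotate r ≠ [] := by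
  intro hc
  exact h (by rwa [List.rotate_eq_nil_iff] at hc)

lemma conj_structure :
    ∀ (d : List (α × Bool)), FRed bb d → ∀ (w : List (α × Bool)), w ≠ [] → CRed bb w →
    ∃ (p : List (α × Bool)) (r : ℕ),
      FRed bb (p ++ w.rotate r ++ FreeGroup.invRev p) ∧
      FreeGroup.mk d * FreeGroup.mk w * (FreeGroup.mk d)⁻¹ =
        FreeGroup.mk (p ++ w.rotate r ++ FreeGroup.invRev p) := by
  intro d
  induction d using List.reverseRecOn with
  | nil =>
    intro _ w hw hcr
    refine ⟨[], 0, ?_, ?_⟩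
    · simpa [FreeGroup.invRev, FRed] using hcr 0
    · simp [← FreeGroup.one_eq_mk, FreeGroup.invRev]
  | append_singleton d' x ih =>
    intro hd w hw hcr
    have hd' : FRed bb d' := (List.isChain_append.mp hd).1
    have hkey : FreeGroup.mk (d' ++ [x]) * FreeGroup.mk w * (FreeGroup.mk (d' ++ [x]))⁻¹
        = FreeGroup.mk d' * (FreeGroup.mk [x] * FreeGroup.mk w * (FreeGroup.mk [x])⁻¹) *
            (FreeGroup.mk d')⁻¹ := by
      rw [← FreeGroup.mul_mk]
      group
    obtain ⟨a, t, rfl⟩ : ∃ a t, w = a :: t := by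
      rcases w with _ | ⟨a, t⟩
      · exact absurd rfl hw
      · exact ⟨a, t, rfl⟩
    by_cases hA : a = bb x
    · -- the letter x cancels the head of w
      have hx : x = bb a := bb_eq_iff.mp hA
      have hinner : FreeGroup.mk [x] * FreeGroup.mk (a :: t) * (FreeGroup.mk [x])⁻¹ =
          FreeGroup.mk ((a :: t).rotate 1) := by
        rw [hx, rotate_one_cons]
        exact conj_rot1 a t
      obtain ⟨p, r, hred, heq⟩ := ih hd' ((a :: t).rotate 1)
        (rotate_ne_nil (by simp) 1) (cred_rotate hcr 1)
      rw [List.rotate_rotate] at hred heq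
      refine ⟨p, 1 + r, hred, ?_⟩
      rw [hkey, hinner, heq]
    · by_cases hB : (a :: t).getLast (by simp) = x
      · -- the letter x⁻¹ cancels the last letter of w
        obtain ⟨u, hu⟩ : ∃ u, a :: t = u ++ [x] :=
          ⟨(a :: t).dropLast, by rw [← hB]; exact (List.dropLast_append_getLast (by simp)).symm⟩
        have hrot : (a :: t).rotate u.length = x :: u := by
          rw [hu, List.rotate_eq_drop_append_take (by simp), List.drop_left, List.take_left]
          rfl
        have hinner : FreeGroup.mk [x] * FreeGroup.mk (a :: t) * (FreeGroup.mk [x])⁻¹ =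
            FreeGroup.mk ((a :: t).rotate u.length) := by
          rw [hrot, hu]
          exact conj_rotlast x u
        obtain ⟨p, r, hred, heq⟩ := ih hd' ((a :: t).rotate u.length)
          (rotate_ne_nil (by simp) _) (cred_rotate hcr _)
        rw [List.rotate_rotate] at hred heq
        refine ⟨p, u.length + r, hred, ?_⟩
        rw [hkey, hinner, heq]
      · -- no cancellation: the conjugate is d ++ w ++ d⁻¹ with d = d' ++ [x]
        refine ⟨d' ++ [x], 0, ?_, ?_⟩
        · rw [List.rotate_zero, FRed]
          have hw0 : List.Chain' (fun p q => q ≠ bb p) (a :: t) := by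
            have := hcr 0
            rwa [List.rotate_zero] at this
          have hinv : FreeGroup.invRev (d' ++ [x]) = bb x :: FreeGroup.invRev d' := by
            simp [invRev_eq]
          rw [List.append_assoc, List.Chain', List.isChain_append]
          refine ⟨hd, ?_, ?_⟩
          · rw [List.isChain_append]
            refine ⟨hw0, fred_invRev hd, ?_⟩
            intro y hy z hz
            rw [hinv] at hz
            simp only [List.head?_cons, Option.mem_def, Option.some.injEq] at hz
            subst hz
            have hy' : y = (a :: t).getLast (by simp) := by
              have hg := List.getLast?_eq_getLast (l := a :: t) (by simp)
              rw [hg] at hy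
              exact (by simpa using hy : _ = y).symm
            intro hcon
            apply hB
            have h2 := congrArg bb hcon
            simp only [bb_bb] at h2
            rw [hy'] at h2
            exact h2.symm
          · intro y hy z hz
            rw [List.getLast?_concat] at hy
            simp only [Option.mem_def, Option.some.injEq] at hy
            subst hy
            have hz' : z = a := by
              have hh : ((a :: t) ++ FreeGroup.invRev (d' ++ [x])).head? = some a := rfl
              rw [hh] at hz
              exact (by simpa using hz : a = z).symm
            subst hz'
            exact hA
        · rw [List.rotate_zero]
          exact conj_eq_mk (d' ++ [x]) (a :: t)

lemma conj_rot {w₁ w₂ : List (α × Bool)} (h1 : w₁ ≠ []) (hc1 : CRed bb w₁)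
    (hc2 : CRed bb w₂) (h : IsConj (FreeGroup.mk w₁) (FreeGroup.mk w₂)) :
    ∃ r, w₂ = w₁.rotate r := by
  obtain ⟨c, hc⟩ := isConj_iff.mp h
  obtain ⟨p, r, hred, heq⟩ := conj_structure c.toWord (fred_toWord c) w₁ h1 hc1
  rw [FreeGroup.mk_toWord, hc] at heq
  have hw2red : FRed bb w₂ := by have := hc2 0; rwa [List.rotate_zero] at this
  have hlist := mk_eq_mk heq hw2red hred
  rcases p with _ | ⟨a, p'⟩
  · exact ⟨r, by simpa [FreeGroup.invRev] using hlist⟩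
  · exfalso
    have hshape : w₂ = (a :: (p' ++ w₁.rotate r ++ FreeGroup.invRev p')) ++ [bb a] := by
      rw [hlist]
      simp [invRev_eq, List.append_assoc]
    set Z := a :: (p' ++ w₁.rotate r ++ FreeGroup.invRev p') with hZ
    have hrot : w₂.rotate Z.length = bb a :: Z := by
      rw [hshape, List.rotate_eq_drop_append_take (by simp), List.drop_left, List.take_left]
      rfl
    have hch := hc2 Z.length
    rw [hrot] at hch
    have hcontr := (List.isChain_cons_cons.mp hch).1
    simp [bb_bb] at hcontr

end FGaux

section SegLemmas

variable {A : Type*} (v : ℕ → A)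

lemma seg_length (i len : ℕ) : (seg v i len).length = len := by simp [seg]

lemma seg_append (i a b : ℕ) : seg v i a ++ seg v (i + a) b = seg v i (a + b) := by
  rw [seg, seg, seg, List.range_add, List.map_append, List.map_map]
  congr 1
  apply List.map_congr_left
  intro t _
  simp [Nat.add_assoc]

lemma seg_getElem (i len x : ℕ) (hx : x < len) :
    (seg v i len)[x]'(by rw [seg_length]; exact hx) = v (i + x) := by
  simp [seg]

lemma seg_ne_nil (i len : ℕ) (h : 0 < len) : seg v i len ≠ [] := by
  intro hc
  have := congrArg List.length hc
  rw [seg_length] at this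
  simp at this
  omega

lemma seg_concat (i len : ℕ) : seg v i (len + 1) = seg v i len ++ [v (i + len)] := by
  rw [← seg_append v i len 1]
  congr 1

lemma seg_cons (i len : ℕ) : seg v i (len + 1) = v i :: seg v (i + 1) len := by
  have := seg_append v i 1 len
  rw [Nat.add_comm 1 len] at this
  rw [← this]
  congr 1

lemma seg_head? (i len : ℕ) (h : 0 < len) : (seg v i len).head? = some (v i) := by
  obtain ⟨L, rfl⟩ : ∃ L, len = L + 1 := ⟨len - 1, by omega⟩
  rw [seg_cons]
  rfl

lemma seg_getLast? (i len : ℕ) (h : 0 < len) :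
    (seg v i len).getLast? = some (v (i + len - 1)) := by
  obtain ⟨L, rfl⟩ : ∃ L, len = L + 1 := ⟨len - 1, by omega⟩
  rw [seg_concat, List.getLast?_concat]
  congr 2

lemma seg_congr (i i' len : ℕ) (h : ∀ x, x < len → v (i + x) = v (i' + x)) :
    seg v i len = seg v i' len := by
  rw [seg, seg]
  apply List.map_congr_left
  intro t ht
  exact h t (List.mem_range.mp ht)

lemma fred_seg (bar : A → A) (hred : ∀ t, v (t + 1) ≠ bar (v t)) (i len : ℕ) :
    FRed bar (seg v i len) := by
  rw [FRed, seg, List.Chain', List.isChain_map]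
  rcases len with _ | L
  · simp
  · rw [List.isChain_range_succ]
    intro x _
    have := hred (i + x)
    rwa [Nat.add_assoc] at this

lemma cred_seg (bar : A → A) (hred : ∀ t, v (t + 1) ≠ bar (v t)) (i len : ℕ)
    (hlen : 0 < len) (hJ : v i ≠ bar (v (i + len - 1))) : CRed bar (seg v i len) := by
  intro r
  rw [← List.rotate_mod, seg_length]
  set r' := r % len with hr'
  have hr'lt : r' < len := Nat.mod_lt _ hlen
  rcases Nat.eq_zero_or_pos r' with h0 | hpos
  · rw [h0, List.rotate_zero]
    exact fred_seg v bar hred i len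
  · have hdecomp : seg v i len = seg v i r' ++ seg v (i + r') (len - r') := by
      rw [seg_append]
      congr 1
      omega
    have hrot : (seg v i len).rotate r' = seg v (i + r') (len - r') ++ seg v i r' := by
      rw [List.rotate_eq_drop_append_take (by rw [seg_length]; omega)]
      rw [hdecomp, List.drop_left' (seg_length v i r'), List.take_left' (seg_length v i r')]
    rw [hrot, FRed, List.Chain', List.isChain_append]
    refine ⟨fred_seg v bar hred _ _, fred_seg v bar hred _ _, ?_⟩
    intro y hy z hz
    rw [seg_getLast? v _ _ (by omega)] at hy
    rw [seg_head? v _ _ hpos] at hz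
    simp only [Option.mem_def, Option.some.injEq] at hy hz
    subst hy
    subst hz
    have : i + r' + (len - r') - 1 = i + len - 1 := by omega
    rw [this]
    exact hJ

end SegLemmas


section Periodic

variable {A : Type*} {v : ℕ → A} {n : ℕ}

lemma v_add_mul (hper : ∀ t, v (t + n) = v t) : ∀ (c t : ℕ), v (t + c * n) = v t := by
  intro c
  induction c with
  | zero => simp
  | succ c ih =>
    intro t
    have : t + (c + 1) * n = (t + c * n) + n := by ring
    rw [this, hper, ih]

lemma v_mod (hn : 0 < n) (hper : ∀ t, v (t + n) = v t) (a : ℕ) : v a = v (a % n) := by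
  conv_lhs => rw [← Nat.mod_add_div a n]
  rw [Nat.mul_comm]
  exact v_add_mul hper _ _

lemma v_congr (hn : 0 < n) (hper : ∀ t, v (t + n) = v t) {a b : ℕ}
    (h : a % n = b % n) : v a = v b := by
  rw [v_mod hn hper a, h, ← v_mod hn hper b]

lemma pw_succ {w : List A} (m : ℕ) : pw w (m + 1) = w ++ pw w m := by
  simp [pw, List.replicate_succ]

lemma pw_seg (hn : 0 < n) (hper : ∀ t, v (t + n) = v t) (i : ℕ) :
    ∀ m, pw (seg v i n) m = seg v i (m * n) := by
  intro m
  induction m with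
  | zero => simp [pw, seg]
  | succ m ih =>
    rw [pw_succ, ih]
    have hshift : seg v i (m * n) = seg v (i + n) (m * n) := by
      apply seg_congr
      intro x _
      have := hper (i + x)
      rw [show i + x + n = i + n + x by ring] at this
      exact this.symm
    rw [hshift, seg_append]
    congr 1
    ring

lemma shift_period (hn : 0 < n) (hper : ∀ t, v (t + n) = v t)
    (hnp : Nonpower (seg v 0 n)) (c : ℕ) (hc : ∀ z, v (z + c) = v z) : c % n = 0 := by
  by_contra hd0
  set d := c % n with hdc
  have hd_pos : 0 < d := Nat.pos_of_ne_zero hd0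
  have hd_lt : d < n := Nat.mod_lt _ hn
  have hd : ∀ z, v (z + d) = v z := by
    intro z
    have hcong : (z + d) % n = (z + c) % n :=
      (Nat.ModEq.add_left z (Nat.mod_modEq c n))
    rw [v_mod hn hper (z + d), hcong, ← v_mod hn hper (z + c)]
    exact hc z
  set g := Nat.gcd d n with hgdef
  have hg_pos : 0 < g := Nat.gcd_pos_of_pos_right d hn
  have hg_dvd : g ∣ n := Nat.gcd_dvd_right d n
  have hg_lt : g < n := lt_of_le_of_lt (Nat.gcd_le_left n hd_pos) hd_lt
  obtain ⟨a, -, ha⟩ := Nat.exists_mul_mod_eq_gcd (k := n) (n := d) (by omega)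
  have hmul : ∀ (e z : ℕ), v (z + e * d) = v z := by
    intro e
    induction e with
    | zero => simp
    | succ e ih =>
      intro z
      have : z + (e + 1) * d = (z + e * d) + d := by ring
      rw [this, hd, ih]
  have hg : ∀ z, v (z + g) = v z := by
    intro z
    have h1 : (z + g) % n = (z + d * a) % n := by
      rw [hgdef, ← ha]
      exact Nat.ModEq.add_left z (Nat.mod_modEq (d * a) n)
    rw [v_mod hn hper (z + g), h1, ← v_mod hn hper (z + d * a), Nat.mul_comm d a]
    exact hmul a z
  have hmulg : (n / g) * g = n := Nat.div_mul_cancel hg_dvd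
  have h2 : 2 ≤ n / g := by
    rcases hq : n / g with _ | _ | e
    · rw [hq] at hmulg; omega
    · rw [hq] at hmulg; omega
    · omega
  exact hnp ⟨seg v 0 g, n / g, h2, 0, by
    rw [List.rotate_zero, pw_seg hg_pos hg 0, hmulg]⟩

lemma cong_of_window (hn : 0 < n) (hper : ∀ t, v (t + n) = v t)
    (hnp : Nonpower (seg v 0 n)) (a b : ℕ) (hw : ∀ x, x < n → v (a + x) = v (b + x)) :
    a % n = b % n := by
  have han : a % n < n := Nat.mod_lt _ hn
  set e := n - a % n with hedef
  set c := (b + e) % n with hcdef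
  have hae : (a + e) % n = 0 := by
    have h1 : (a + e) % n = (a % n + e) % n := Nat.ModEq.add_right e (Nat.mod_modEq a n).symm
    rw [h1, show a % n + e = n by omega, Nat.mod_self]
  have hc : ∀ z, v (z + c) = v z := by
    intro z
    set x := (z + e) % n with hxdef
    have hx : x < n := Nat.mod_lt _ hn
    have e1 : (a + x) % n = z % n := by
      have h1 : (a + x) % n = (a + (z + e)) % n := Nat.ModEq.add_left a (Nat.mod_modEq (z + e) n)
      have h2 : a + (z + e) = z + (a + e) := by ring
      have h3 : (z + (a + e)) % n = (z + (a + e) % n) % n :=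
        (Nat.ModEq.add_left z (Nat.mod_modEq (a + e) n)).symm
      rw [h1, h2, h3, hae, Nat.add_zero]
    have e2 : (b + x) % n = (z + c) % n := by
      have h1 : (b + x) % n = (b + (z + e)) % n := Nat.ModEq.add_left b (Nat.mod_modEq (z + e) n)
      have h2 : b + (z + e) = z + (b + e) := by ring
      have h3 : (z + (b + e)) % n = (z + (b + e) % n) % n :=
        (Nat.ModEq.add_left z (Nat.mod_modEq (b + e) n)).symm
      rw [h1, h2, h3, ← hcdef]
    calc v (z + c) = v ((z + c) % n) := v_mod hn hper _
      _ = v ((b + x) % n) := by rw [e2]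
      _ = v (b + x) := (v_mod hn hper _).symm
      _ = v (a + x) := (hw x hx).symm
      _ = v ((a + x) % n) := v_mod hn hper _
      _ = v (z % n) := by rw [e1]
      _ = v z := (v_mod hn hper _).symm
  have hc0 : c % n = 0 := shift_period hn hper hnp c hc
  have hclt : c < n := Nat.mod_lt _ hn
  have hceq : c = 0 := by rwa [Nat.mod_eq_of_lt hclt] at hc0
  -- from (b + e) % n = 0 and (a + e) % n = 0 conclude a % n = b % n
  have hbe : (b + e) % n = 0 := by rw [← hcdef]; exact hceq
  have : (a + e) % n = (b + e) % n := by rw [hae, hbe]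
  exact Nat.ModEq.add_right_cancel' e this

end Periodic

lemma smod_facts {n i j : ℕ} (hn0 : 0 < n) (hi : i < n) (hj : j < n) (hij : i ≠ j) :
    0 < (j + n - i) % n ∧ (i + (j + n - i) % n) % n = j := by
  rcases le_or_gt i j with hle | hlt
  · have he : j + n - i = (j - i) + n := by omega
    rw [he, Nat.add_mod_right, Nat.mod_eq_of_lt (show j - i < n by omega)]
    refine ⟨by omega, ?_⟩
    rw [show i + (j - i) = j by omega, Nat.mod_eq_of_lt hj]
  · rw [Nat.mod_eq_of_lt (show j + n - i < n by omega)]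
    refine ⟨by omega, ?_⟩
    rw [show i + (j + n - i) = j + n by omega, Nat.add_mod_right, Nat.mod_eq_of_lt hj]

/-- In the free group `F` on `q` generators, for a cyclically reduced
nonpower word `V` and distinct linked-type pairs `(i,j) ≠ (k,h)`, the elements
represented by `V_i^m V_{i,j}` (with `m ≥ 2`) and `V_k^l V_{k,h}` (with `l ≥ 1`)
lie in different conjugacy classes of `F`. -/
theorem stmt12 (q : ℕ) (v : ℕ → Fin q × Bool) (n : ℕ) (hn : 1 ≤ n)
    (hper : ∀ t, v (t + n) = v t)
    (hred : ∀ t, v (t + 1) ≠ barF q (v t))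
    (hnp : Nonpower (seg v 0 n))
    (i j k h : ℕ) (hi : i < n) (hj : j < n) (hk : k < n) (hh : h < n)
    (hij : i ≠ j) (h1 : v i ≠ v j) (h2 : barF q (v i) ≠ v (j + n - 1))
    (hkh : k ≠ h) (h3 : v k ≠ v h) (h4 : barF q (v k) ≠ v (h + n - 1))
    (hne : (i, j) ≠ (k, h))
    (m l : ℕ) (hm : 2 ≤ m) (hl : 1 ≤ l) :
    ¬ IsConj (FreeGroup.mk (pw (seg v i n) m ++ seg v i ((j + n - i) % n)))
             (FreeGroup.mk (pw (seg v k n) l ++ seg v k ((h + n - k) % n))) := by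
  intro hconj
  have hnpos : 0 < n := hn
  set s := (j + n - i) % n with hsdef
  set t := (h + n - k) % n with htdef
  obtain ⟨hspos, his⟩ := smod_facts hnpos hi hj hij
  obtain ⟨htpos, hkt⟩ := smod_facts hnpos hk hh hkh
  rw [← hsdef] at hspos his
  rw [← htdef] at htpos hkt
  have hslt : s < n := Nat.mod_lt _ hnpos
  have htlt : t < n := Nat.mod_lt _ hnpos
  -- rewrite the two words as single segments
  have hWgen : ∀ (a e c : ℕ), 0 < c → pw (seg v a n) e ++ seg v a c = seg v a (e * n + c) := by
    intro a e c _
    rw [pw_seg hnpos hper a e]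
    have hsh : seg v a c = seg v (a + e * n) c := by
      apply seg_congr
      intro x _
      have hx := v_add_mul hper e (a + x)
      rw [show a + x + e * n = a + e * n + x by ring] at hx
      exact hx.symm
    rw [hsh, seg_append]
  rw [hWgen i m s hspos, hWgen k l t htpos] at hconj
  set N1 := m * n + s with hN1def
  set N2 := l * n + t with hN2def
  have hN1pos : 0 < N1 := by omega
  have hN2pos : 0 < N2 := by omega
  -- junction conditions give cyclic reducedness
  have hbarbar : ∀ x : Fin q × Bool, barF q (barF q x) = x := by
    intro x; simp [barF]
  have hjunc : ∀ (a b c e : ℕ), 0 < c → c < n → b < n → (a + c) % n = b →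
      barF q (v a) ≠ v (b + n - 1) → 1 ≤ e →
      CRed (barF q) (seg v a (e * n + c)) := by
    intro a b c e hc hcn hbn hab hbar he
    apply cred_seg v (barF q) hred a (e * n + c) (by omega)
    have hcong : (a + (e * n + c) - 1) % n = (b + n - 1) % n := by
      have e1 : a + (e * n + c) - 1 = (a + c - 1) + e * n := by omega
      rw [e1, Nat.add_mul_mod_self_right]
      have e2 : (a + c - 1) + 1 = a + c := by omega
      have e3 : (b + n - 1) + 1 = b + n := by omega
      have e4 : (a + c) % n = (b + n) % n := by rw [hab, Nat.add_mod_right, Nat.mod_eq_of_lt hbn]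
      exact Nat.ModEq.add_right_cancel' 1 (by rw [Nat.ModEq, e2, e3]; exact e4)
    have hveq : v (a + (e * n + c) - 1) = v (b + n - 1) := v_congr hnpos hper hcong
    rw [hveq]
    intro hcon
    apply hbar
    rw [hcon, hbarbar]
  have hc1 : CRed (barF q) (seg v i N1) := hjunc i j s m hspos hslt hj his h2 (by omega)
  have hc2 : CRed (barF q) (seg v k N2) := hjunc k h t l htpos htlt hh hkt h4 hl
  -- conjugacy implies rotation
  have hbb : barF q = FGaux.bb := rfl
  rw [hbb] at hc1 hc2
  obtain ⟨r0, hrot⟩ := FGaux.conj_rot (seg_ne_nil v i N1 hN1pos) hc1 hc2 hconj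
  -- lengths agree
  have hlen : N2 = N1 := by
    have := congrArg List.length hrot
    rwa [seg_length, List.length_rotate, seg_length] at this
  have hts : t = s := by
    have e1 : N1 % n = s := by rw [hN1def, Nat.mul_add_mod', Nat.mod_eq_of_lt hslt]
    have e2 : N2 % n = t := by rw [hN2def, Nat.mul_add_mod', Nat.mod_eq_of_lt htlt]
    rw [← e1, ← e2, hlen]
  have hlm : l = m := by
    have : l * n = m * n := by omega
    exact Nat.eq_of_mul_eq_mul_right hnpos this
  rw [hlen] at hrot
  -- pointwise consequence of the rotation
  set r := r0 % N1 with hrdef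
  have hrlt : r < N1 := Nat.mod_lt _ hN1pos
  have hrot' : seg v k N1 = (seg v i N1).rotate r := by
    have hmr : (seg v i N1).rotate (r0 % N1) = (seg v i N1).rotate r0 := by
      conv_lhs => rw [show r0 % N1 = r0 % (seg v i N1).length by rw [seg_length]]
      exact List.rotate_mod _ _
    rw [hrdef, hmr]
    exact hrot
  have key : ∀ x, x < N1 → v (k + x) = v (i + (x + r) % N1) := by
    intro x hx
    have hx2 : x < (seg v k N1).length := by rw [seg_length]; exact hx
    have hx3 : x < ((seg v i N1).rotate r).length := by
      rw [List.length_rotate, seg_length]; exact hx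
    have hg1 : (seg v k N1)[x]'hx2 = ((seg v i N1).rotate r)[x]'hx3 := by
      simp only [hrot']
    have hg0 : ((seg v i N1).rotate r)[x]'hx3 = v (i + (x + r) % N1) := by
      rw [List.getElem_rotate]
      simp only [seg_length]
      exact seg_getElem v i N1 _ (Nat.mod_lt _ hN1pos)
    rw [← hg1, seg_getElem v k N1 x hx] at hg0
    exact hg0
  set LA := N1 - r with hLAdef
  have hLAr : LA + r = N1 := by omega
  have haveA : ∀ x, x < LA → v (k + x) = v ((i + r) + x) := by
    intro x hx
    have := key x (by omega)
    rwa [Nat.mod_eq_of_lt (by omega), show i + (x + r) = i + r + x by ring] at this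
  have haveB : ∀ y, y < r → v ((k + LA) + y) = v (i + y) := by
    intro y hy
    have := key (LA + y) (by omega)
    rw [show LA + y + r = N1 + y by omega, Nat.add_mod_left,
      Nat.mod_eq_of_lt (by omega : y < N1)] at this
    rwa [show k + (LA + y) = k + LA + y by ring] at this
  have hN1big : 2 * n ≤ N1 := by
    have : 2 * n ≤ m * n := Nat.mul_le_mul_right n hm
    omega
  -- mod-n congruence peculiar to N1
  have hN1mod : ∀ a : ℕ, (a + N1) % n = (a + s) % n := by
    intro a
    rw [show a + N1 = (a + s) + m * n by omega, Nat.add_mul_mod_self_right]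
  rcases le_or_gt n LA with hA_long | hA_short
  · have hcong1 : k % n = (i + r) % n :=
      cong_of_window hnpos hper hnp k (i + r) (fun x hx => haveA x (by omega))
    rcases Nat.eq_zero_or_pos r with hr0 | hrpos
    · -- r = 0 : the two pairs coincide
      have hki : k = i := by
        rw [hr0, Nat.add_zero, Nat.mod_eq_of_lt hi] at hcong1
        rw [Nat.mod_eq_of_lt hk] at hcong1
        exact hcong1
      have hjh : j = h := by rw [← his, ← hkt, hts, hki]
      exact hne (by rw [hki, hjh])
    · rcases le_or_gt n r with hr_long | hr_short
      · -- both windows are long: N1 ≡ 0 mod n, impossible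
        have hcong2 : (k + LA) % n = i % n :=
          cong_of_window hnpos hper hnp (k + LA) i (fun y hy => haveB y (by omega))
        have e1 : (k + LA + r) % n = (i + r) % n := Nat.ModEq.add_right r hcong2
        rw [show k + LA + r = k + N1 by omega, ← hcong1, hN1mod k] at e1
        -- e1 : (k + s) % n = k % n
        have e2 : (k + s) % n = (k + 0) % n := by rwa [Nat.add_zero]
        have e3 : s % n = 0 % n := Nat.ModEq.add_left_cancel' k e2
        rw [Nat.mod_eq_of_lt hslt, Nat.zero_mod] at e3
        omega
      · -- the wrapped window is short : contradiction with h1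
        have hy0 := haveB 0 hrpos
        rw [Nat.add_zero, Nat.add_zero] at hy0
        -- (k + LA) ≡ j mod n
        have e1 : (k + LA + r) % n = (j + r) % n := by
          rw [show k + LA + r = k + N1 by omega, hN1mod k]
          have e2 : (k + s) % n = (i + r + s) % n := Nat.ModEq.add_right s hcong1
          rw [e2, show i + r + s = (i + s) + r by ring]
          exact Nat.ModEq.add_right r (by rw [Nat.mod_eq_of_lt hj, his] :
            (i + s) % n = j % n)
        have e2 : (k + LA) % n = j % n := Nat.ModEq.add_right_cancel' r e1
        have : v (k + LA) = v j := by
          apply v_congr hnpos hper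
          rw [e2]
        rw [this] at hy0
        exact h1 hy0.symm
  · -- the unwrapped window is short : contradiction with h3
    have hr_long : n ≤ r := by omega
    have hLApos : 0 < LA := by omega
    have hcong2 : (k + LA) % n = i % n :=
      cong_of_window hnpos hper hnp (k + LA) i (fun y hy => haveB y (by omega))
    have hx0 := haveA 0 hLApos
    rw [Nat.add_zero, Nat.add_zero] at hx0
    -- i + r ≡ h mod n
    have e1 : (i + r + LA) % n = (k + s + LA) % n := by
      rw [show i + r + LA = i + N1 by omega, hN1mod i]
      have e2 : (k + LA + s) % n = (i + s) % n := Nat.ModEq.add_right s hcong2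
      rw [show k + s + LA = k + LA + s by ring, e2]
    have e2 : (i + r) % n = (k + s) % n := Nat.ModEq.add_right_cancel' LA e1
    have : v (i + r) = v h := by
      apply v_congr hnpos hper
      rw [e2, ← hts, hkt, Nat.mod_eq_of_lt hh]
    rw [this] at hx0
    exact h3 hx0
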